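/- As formal power series in q, q · T₁'(q)/T₁(q) = ∑_{n≥1} σ₁(n) qⁿ, where T₁(q) = ∏_{i≥1} 1/(1 - q^{2i-1}); equivalently, q · T₁'(q) = T₁(q) · ∑_{n≥1} σ₁(n) qⁿ. -/

import Mathlib

open PowerSeries

/-- Sum of the odd divisors of `n`. -/
def sigmaO (n : ℕ) : ℕ := ∑ d ∈ n.divisors.filter (fun d => Odd d), d

/-- The coefficientwise (product) topology on `ℚ⟦X⟧`. -/
noncomputable instance : TopologicalSpace (PowerSeries ℚ) :=
  (inferInstance : TopologicalSpace ((Unit →₀ ℕ) → ℚ))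

/-- `T₁(q) = ∏_{i ≥ 1} (1 - q^{2i-1})⁻¹`. -/
noncomputable def T1 : PowerSeries ℚ :=
  ∏' i : ℕ, (1 - (X : PowerSeries ℚ) ^ (2 * i + 1))⁻¹

namespace T1proof

noncomputable def g (i : ℕ) : PowerSeries ℚ := (1 - (X : PowerSeries ℚ) ^ (2 * i + 1))⁻¹

lemma cc (i : ℕ) : constantCoeff (1 - (X : PowerSeries ℚ) ^ (2 * i + 1)) = 1 := by
  simp [pow_succ]

lemma unit_mul (i : ℕ) : (1 - (X : PowerSeries ℚ) ^ (2 * i + 1)) * g i = 1 :=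
  PowerSeries.mul_inv_cancel _ (by rw [cc]; exact one_ne_zero)

lemma g_sub_one (i : ℕ) : g i - 1 = X ^ (2 * i + 1) * g i := by
  have h := unit_mul i
  rw [sub_mul, one_mul] at h
  linear_combination h

lemma X_pow_dvd_g_sub_one (i k : ℕ) (h : k ≤ 2 * i + 1) : (X : PowerSeries ℚ) ^ k ∣ g i - 1 := by
  rw [g_sub_one]
  exact Dvd.dvd.mul_right (pow_dvd_pow X h) _

lemma X_pow_dvd_prod_sub_one (k : ℕ) (s : Finset ℕ) (h : ∀ i ∈ s, k ≤ 2 * i + 1) :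
    (X : PowerSeries ℚ) ^ k ∣ (∏ i ∈ s, g i) - 1 := by
  classical
  induction s using Finset.induction with
  | empty => simp
  | @insert a s ha ih =>
      rw [Finset.prod_insert ha]
      have h1 : (X : PowerSeries ℚ) ^ k ∣ g a - 1 :=
        X_pow_dvd_g_sub_one a k (h a (Finset.mem_insert_self a s))
      have h2 : (X : PowerSeries ℚ) ^ k ∣ (∏ i ∈ s, g i) - 1 :=
        ih (fun i hi => h i (Finset.mem_insert_of_mem hi))
      have : g a * (∏ i ∈ s, g i) - 1
          = g a * ((∏ i ∈ s, g i) - 1) + (g a - 1) := by ring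
      rw [this]
      exact dvd_add (Dvd.dvd.mul_left h2 _) h1

lemma coeff_prod_stable {m n : ℕ} (hmn : m ≤ n) (s : Finset ℕ)
    (hs : Finset.range (n + 1) ⊆ s) :
    coeff m (∏ i ∈ s, g i) = coeff m (∏ i ∈ Finset.range (n + 1), g i) := by
  classical
  rw [← Finset.prod_sdiff hs]
  obtain ⟨h, hh⟩ := X_pow_dvd_prod_sub_one (n + 1) (s \ Finset.range (n + 1))
    (fun i hi => by
      simp only [Finset.mem_sdiff, Finset.mem_range] at hi
      omega)
  have hEq : (∏ i ∈ s \ Finset.range (n + 1), g i)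
      = 1 + X ^ (n + 1) * h := by
    rw [← hh]; ring
  rw [hEq, add_mul, one_mul, map_add]
  have hz : coeff m (X ^ (n + 1) * h * ∏ i ∈ Finset.range (n + 1), g i) = 0 := by
    have : (X : PowerSeries ℚ) ^ (n + 1) ∣
        X ^ (n + 1) * h * ∏ i ∈ Finset.range (n + 1), g i :=
      Dvd.dvd.mul_right (dvd_mul_right _ _) _
    exact PowerSeries.X_pow_dvd_iff.mp this m (by omega)
  rw [hz, add_zero]

end T1proof

namespace T1proof



noncomputable def Lser : PowerSeries ℚ :=
  PowerSeries.mk fun m => coeff m (∏ i ∈ Finset.range (m + 1), g i)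

lemma coeff_apply' (f : PowerSeries ℚ) (d : Unit →₀ ℕ) : coeff (d ()) f = f d := by
  have hd : d = Finsupp.single () (d ()) := (Finsupp.unique_single d).trans (by simp)
  conv_rhs => rw [hd]
  rfl

lemma hasProd_g : HasProd g Lser := by
  have key : ∀ d : Unit →₀ ℕ, Filter.Tendsto (fun s : Finset ℕ => (∏ i ∈ s, g i) d)
      Filter.atTop (nhds (Lser d)) := by
    intro d
    apply Filter.Tendsto.congr' _ tendsto_const_nhds
    rw [Filter.EventuallyEq, Filter.eventually_atTop]
    refine ⟨Finset.range (d () + 1), fun s hs => ?_⟩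
    have key := coeff_prod_stable (le_refl (d ())) s hs
    rw [coeff_apply', coeff_apply'] at key
    have hL : Lser d = (∏ i ∈ Finset.range (d () + 1), g i) d :=
      calc Lser d = coeff (d ()) Lser := (coeff_apply' _ _).symm
        _ = coeff (d ()) (∏ i ∈ Finset.range (d () + 1), g i) := by simp [Lser]
        _ = (∏ i ∈ Finset.range (d () + 1), g i) d := coeff_apply' _ _
    rw [hL]
    exact key.symm
  exact tendsto_pi_nhds.mpr key

lemma T1_eq_Lser : T1 = Lser := by
  haveI : T2Space (PowerSeries ℚ) := inferInstanceAs (T2Space ((Unit →₀ ℕ) → ℚ))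
  exact hasProd_g.tprod_eq

lemma coeff_T1 {m n : ℕ} (h : m ≤ n) :
    coeff m T1 = coeff m (∏ i ∈ Finset.range (n + 1), g i) := by
  rw [T1_eq_Lser, Lser, coeff_mk]
  exact (coeff_prod_stable (le_refl m) _ (Finset.range_subset_range.mpr (by omega))).symm

lemma g_eq_mk (i : ℕ) :
    g i = PowerSeries.mk fun k => if (2 * i + 1) ∣ k then (1 : ℚ) else 0 := by
  have hcc : constantCoeff (1 - (X : PowerSeries ℚ) ^ (2 * i + 1)) ≠ 0 := by
    rw [cc]; exact one_ne_zero
  symm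
  rw [g, PowerSeries.eq_inv_iff_mul_eq_one hcc]
  ext k
  rw [mul_sub, mul_one, map_sub, coeff_mk, PowerSeries.coeff_mul_X_pow', coeff_one]
  set a := 2 * i + 1 with ha
  rcases Nat.eq_zero_or_pos k with hk | hk
  · subst hk
    simp [ha]
  · have hne : k ≠ 0 := by omega
    by_cases hle : a ≤ k
    · have hiff : a ∣ k ↔ a ∣ k - a := by
        constructor
        · intro h; exact Nat.dvd_sub h dvd_rfl
        · intro h
          have h2 : a ∣ (k - a) + a := Nat.dvd_add h dvd_rfl
          rwa [Nat.sub_add_cancel hle] at h2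
      rw [if_pos hle, coeff_mk]
      by_cases hd : a ∣ k
      · rw [if_pos hd, if_pos (hiff.mp hd), if_neg hne]; ring
      · rw [if_neg hd, if_neg (fun h => hd (hiff.mpr h)), if_neg hne]; ring
    · have hd : ¬ a ∣ k := fun h => hle (Nat.le_of_dvd hk h)
      rw [if_neg hd, if_neg hle, if_neg hne]; ring

lemma deriv_one_sub_X_pow (a : ℕ) :
    d⁄dX ℚ (1 - (X : PowerSeries ℚ) ^ a) = -(C (a : ℚ)) * X ^ (a - 1) := by
  rw [map_sub, Derivation.map_one_eq_zero, Derivation.leibniz_pow, derivative_X]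
  simp only [smul_eq_mul, mul_one, nsmul_eq_mul, zero_sub]
  rw [← map_natCast C a]
  ring

lemma X_mul_deriv_g (i : ℕ) :
    X * d⁄dX ℚ (g i) = C ((2 * i + 1 : ℕ) : ℚ) * X ^ (2 * i + 1) * g i * g i := by
  have h : d⁄dX ℚ (g i) = -(g i) ^ 2 * d⁄dX ℚ (1 - (X : PowerSeries ℚ) ^ (2 * i + 1)) := by
    rw [g]; exact derivative_inv' _
  rw [h, deriv_one_sub_X_pow, Nat.add_sub_cancel]
  have hX : (X : PowerSeries ℚ) * X ^ (2 * i) = X ^ (2 * i + 1) := (pow_succ' X _).symm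
  linear_combination (C ((2 * i + 1 : ℕ) : ℚ)) * (g i) ^ 2 * hX


noncomputable def S (N : ℕ) : PowerSeries ℚ :=
  ∑ i ∈ Finset.range N, C ((2 * i + 1 : ℕ) : ℚ) * X ^ (2 * i + 1) * g i

lemma logderiv (N : ℕ) :
    X * d⁄dX ℚ (∏ i ∈ Finset.range N, g i)
      = (∏ i ∈ Finset.range N, g i) * S N := by
  induction N with
  | zero => simp [S]
  | succ n ih =>
      rw [Finset.prod_range_succ, S, Finset.sum_range_succ, ← S]
      rw [Derivation.leibniz]
      simp only [smul_eq_mul]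
      linear_combination (∏ i ∈ Finset.range n, g i) * X_mul_deriv_g n + g n * ih

lemma coeff_S {k N : ℕ} (hk : k ≤ N) :
    coeff k (S N) = if k = 0 then 0 else (sigmaO k : ℚ) := by
  rw [S, map_sum]
  have hterm : ∀ i, coeff k (C ((2 * i + 1 : ℕ) : ℚ) * X ^ (2 * i + 1) * g i)
      = if (2 * i + 1) ∣ k ∧ k ≠ 0 then ((2 * i + 1 : ℕ) : ℚ) else 0 := by
    intro i
    rw [mul_assoc, PowerSeries.coeff_C_mul, PowerSeries.coeff_X_pow_mul', g_eq_mk, coeff_mk]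
    set a := 2 * i + 1 with ha
    by_cases hle : a ≤ k
    · have hk0 : k ≠ 0 := by omega
      have hiff : a ∣ k ↔ a ∣ k - a := by
        constructor
        · intro h; exact Nat.dvd_sub h dvd_rfl
        · intro h
          have h2 : a ∣ (k - a) + a := Nat.dvd_add h dvd_rfl
          rwa [Nat.sub_add_cancel hle] at h2
      rw [if_pos hle]
      by_cases hd : a ∣ k
      · rw [if_pos (hiff.mp hd), if_pos ⟨hd, hk0⟩]; ring
      · rw [if_neg (fun h => hd (hiff.mpr h)), if_neg (by tauto)]; ring
    · rw [if_neg hle, mul_zero, eq_comm, if_neg]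
      rintro ⟨hd, hk0⟩
      exact hle (Nat.le_of_dvd (by omega) hd)
  simp only [hterm]
  rcases Nat.eq_zero_or_pos k with hk0 | hk0
  · subst hk0; simp
  · have hkne : k ≠ 0 := by omega
    rw [if_neg hkne]
    have h1 : ∀ i : ℕ, ((2 * i + 1) ∣ k ∧ k ≠ 0) ↔ (2 * i + 1) ∣ k := by
      intro i; constructor <;> intro h
      · exact h.1
      · exact ⟨h, hkne⟩
    simp only [h1]
    rw [← Finset.sum_filter]
    rw [sigmaO, Nat.cast_sum]
    apply Finset.sum_nbij' (fun i => 2 * i + 1) (fun d => d / 2)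
    · intro i hi
      simp only [Finset.mem_filter, Finset.mem_range] at hi
      simp only [Finset.mem_filter, Nat.mem_divisors]
      exact ⟨⟨hi.2, hkne⟩, ⟨i, by omega⟩⟩
    · intro d hd
      simp only [Finset.mem_filter, Nat.mem_divisors] at hd
      obtain ⟨⟨hdvd, _⟩, hodd⟩ := hd
      obtain ⟨j, hj⟩ := hodd
      have hdk : d ≤ k := Nat.le_of_dvd hk0 hdvd
      simp only [Finset.mem_filter, Finset.mem_range]
      constructor
      · omega
      · have : 2 * (d / 2) + 1 = d := by omega
        rw [this]; exact hdvd
    · intro i hi; omega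
    · intro d hd
      simp only [Finset.mem_filter, Nat.mem_divisors] at hd
      obtain ⟨j, hj⟩ := hd.2
      omega
    · intro i hi; rfl

lemma coeff_mul_congr {n : ℕ} {f f' h h' : PowerSeries ℚ}
    (hf : ∀ k ≤ n, coeff k f = coeff k f')
    (hh : ∀ k ≤ n, coeff k h = coeff k h') :
    coeff n (f * h) = coeff n (f' * h') := by
  rw [PowerSeries.coeff_mul, PowerSeries.coeff_mul]
  apply Finset.sum_congr rfl
  intro p hp
  rw [Finset.HasAntidiagonal.mem_antidiagonal] at hp
  rw [hf p.1 (by omega), hh p.2 (by omega)]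

end T1proof

open T1proof

theorem q_mul_T1_deriv :
    X * (d⁄dX ℚ) T1 =
      T1 * PowerSeries.mk fun n => if n = 0 then 0 else (sigmaO n : ℚ) := by
  ext n
  rcases Nat.eq_zero_or_pos n with h0 | hn
  · subst h0
    rw [PowerSeries.coeff_zero_eq_constantCoeff, map_mul, map_mul, constantCoeff_X, zero_mul]
    have : constantCoeff (PowerSeries.mk fun n => if n = 0 then 0 else (sigmaO n : ℚ)) = 0 := by
      rw [← PowerSeries.coeff_zero_eq_constantCoeff, coeff_mk]
      simp
    rw [this, mul_zero]
  · obtain ⟨m, rfl⟩ : ∃ m, n = m + 1 := ⟨n - 1, by omega⟩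
    have hL : coeff (m + 1) (X * d⁄dX ℚ T1) = coeff (m + 1) T1 * (m + 1) := by
      rw [PowerSeries.coeff_succ_X_mul, coeff_derivative]
    have hLP : coeff (m + 1) (X * d⁄dX ℚ (∏ i ∈ Finset.range (m + 2), g i))
        = coeff (m + 1) (∏ i ∈ Finset.range (m + 2), g i) * (m + 1) := by
      rw [PowerSeries.coeff_succ_X_mul, coeff_derivative]
    have hT : coeff (m + 1) T1 = coeff (m + 1) (∏ i ∈ Finset.range (m + 2), g i) :=
      coeff_T1 (le_refl _)
    have hR : coeff (m + 1)
          (T1 * PowerSeries.mk fun n => if n = 0 then 0 else (sigmaO n : ℚ))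
        = coeff (m + 1) ((∏ i ∈ Finset.range (m + 2), g i) * S (m + 2)) := by
      apply coeff_mul_congr
      · intro k hk
        exact coeff_T1 hk
      · intro k hk
        rw [coeff_mk, coeff_S (by omega)]
    rw [hL, hR, ← logderiv (m + 2), hLP, hT]
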